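/- Suppose the PPDG sequence {(x^k, y^k)} is bounded and the Lyapunov function 𝓛 is a KL function satisfying the Łojasiewicz property with exponent θ = 0 (i.e. with concave function φ(s) = σ s for some σ > 0). Then the sequence {(x^k, y^k)} converges in finitely many steps: there exists an integer K such that (x^k, y^k) = (x^K, y^K) for all k ≥ K. -/

import Mathlib

open RealInnerProductSpace Filter

noncomputable section

/-- The convex subdifferential of a real-valued convex function. -/
def subdiff {Y : Type*} [NormedAddCommGroup Y] [InnerProductSpace ℝ Y]
    (φ : Y → ℝ) (q : Y) : Set Y :=
  {g : Y | ∀ w : Y, φ q + ⟪g, w - q⟫ ≤ φ w}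

/-- The Lyapunov function `𝓛` as a function of `z = (x,y,u,v)`. -/
def LyapFn {X : Type*} [NormedAddCommGroup X] [InnerProductSpace ℝ X]
    {Y : Type*} [NormedAddCommGroup Y] [InnerProductSpace ℝ Y]
    (A : X →L[ℝ] Y) (f : X → ℝ) (hs : Y → ℝ) (a b : ℝ)
    (z : X × Y × X × X) : ℝ :=
  (f z.1 + ⟪z.2.1, A z.1⟫ - hs z.2.1) - a * ‖z.1 - z.2.2.1‖^2 + b * ‖z.1 - z.2.2.2‖^2

/-- The subdifferential of the Lyapunov function `𝓛` at `z = (x,y,u,v)`. -/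
def subLyap {X : Type*} [NormedAddCommGroup X] [InnerProductSpace ℝ X]
    [FiniteDimensional ℝ X]
    {Y : Type*} [NormedAddCommGroup Y] [InnerProductSpace ℝ Y] [FiniteDimensional ℝ Y]
    (A : X →L[ℝ] Y) (f' : X → X) (hs : Y → ℝ) (a b : ℝ)
    (z : X × Y × X × X) : Set (X × Y × X × X) :=
  {d | ∃ g ∈ subdiff hs z.2.1,
    d = (f' z.1 + (ContinuousLinearMap.adjoint A) z.2.1
          - (2*a) • (z.1 - z.2.2.1) + (2*b) • (z.1 - z.2.2.2),
        A z.1 - g,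
        (2*a) • (z.1 - z.2.2.1),
        (2*b) • (z.2.2.2 - z.1))}

lemma descent_lemma {X : Type*} [NormedAddCommGroup X] [InnerProductSpace ℝ X] [CompleteSpace X]
    (f : X → ℝ) (f' : X → X) (hf : ∀ p, HasGradientAt f (f' p) p)
    (L : ℝ) (hLip : ∀ p q, ‖f' p - f' q‖ ≤ L * ‖p - q‖)
    (p q : X) : f q ≤ f p + ⟪f' p, q - p⟫ + L/2 * ‖q - p‖^2 := by
  set v := q - p with hv
  have key : ∀ t : ℝ, HasDerivAt (fun t : ℝ => f (p + t • v)) ⟪f' (p + t • v), v⟫ t := by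
    intro t
    have h1 : HasDerivAt (fun t : ℝ => p + t • v) v t := by
      simpa using ((hasDerivAt_id t).smul_const v).const_add p
    have h2 := (hf (p + t • v)).hasFDerivAt.comp_hasDerivAt t h1
    simpa [InnerProductSpace.toDual_apply_apply, Function.comp_def] using h2
  set g : ℝ → ℝ := fun t => f (p + t • v) - t * ⟪f' p, v⟫ - t^2 * (L/2 * ‖v‖^2) with hgdef
  have hg : ∀ t : ℝ, HasDerivAt g (⟪f' (p + t • v), v⟫ - ⟪f' p, v⟫ - (2*t) * (L/2 * ‖v‖^2)) t := by
    intro t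
    have h3 := ((key t).sub ((hasDerivAt_id t).mul_const (⟪f' p, v⟫ : ℝ))).sub
      ((hasDerivAt_pow 2 t).mul_const (L/2 * ‖v‖^2))
    simpa [g, pow_one, Pi.sub_def] using h3
  have hanti : AntitoneOn g (Set.Icc (0:ℝ) 1) := by
    apply antitoneOn_of_deriv_nonpos (convex_Icc 0 1)
    · exact fun t _ => (hg t).continuousAt.continuousWithinAt
    · exact fun t _ => (hg t).differentiableAt.differentiableWithinAt
    · intro t ht
      rw [interior_Icc] at ht
      rw [(hg t).deriv]
      have h4 : ⟪f' (p + t • v) - f' p, v⟫ ≤ L * t * ‖v‖^2 := by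
        calc ⟪f' (p + t • v) - f' p, v⟫ ≤ ‖f' (p + t • v) - f' p‖ * ‖v‖ :=
              real_inner_le_norm _ _
        _ ≤ (L * ‖p + t • v - p‖) * ‖v‖ := by
              have := hLip (p + t • v) p
              nlinarith [norm_nonneg v, norm_nonneg (f' (p + t • v) - f' p)]
        _ = L * t * ‖v‖^2 := by
              rw [add_sub_cancel_left, norm_smul, Real.norm_eq_abs, abs_of_pos ht.1]
              ring
      have h5 : ⟪f' (p + t • v), v⟫ - ⟪f' p, v⟫ = ⟪f' (p + t • v) - f' p, v⟫ := by
        rw [inner_sub_left]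
      rw [h5]
      nlinarith [h4]
  have h01 := hanti (Set.mem_Icc.mpr ⟨le_refl 0, zero_le_one⟩)
    (Set.mem_Icc.mpr ⟨zero_le_one, le_refl 1⟩) zero_le_one
  simp only [g, one_smul, zero_smul, add_zero, one_pow, zero_pow, one_mul, zero_mul,
    sub_zero] at h01
  have hpv : p + v = q := by rw [hv]; abel
  rw [hpv] at h01
  linarith

lemma subgrad_of_min {Y : Type*} [NormedAddCommGroup Y] [InnerProductSpace ℝ Y]
    (hs : Y → ℝ) (hconv : ConvexOn ℝ Set.univ hs)
    (Q : Y → Y) (hsymm : ∀ u v, ⟪Q u, v⟫ = ⟪u, Q v⟫) (hpos : ∀ u, (0:ℝ) ≤ ⟪Q u, u⟫)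
    (hQlin : ∀ (s : ℝ) (u v : Y), Q (u + s • v) = Q u + s • Q v)
    (r y0 v : Y)
    (hmin : ∀ w, hs v - ⟪v, r⟫ + (1/2) * ⟪Q (v - y0), v - y0⟫
      ≤ hs w - ⟪w, r⟫ + (1/2) * ⟪Q (w - y0), w - y0⟫) :
    (r - Q (v - y0)) ∈ subdiff hs v := by
  intro w
  set h := w - v with hh
  set u := v - y0 with hu
  set C : ℝ := ⟪Q h, h⟫ with hC
  have hCpos : 0 ≤ C := hpos h
  have hip : ⟪r - Q u, w - v⟫ = ⟪h, r⟫ - ⟪Q u, h⟫ := by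
    rw [← hh, inner_sub_left, real_inner_comm r h]
  have key : ∀ t : ℝ, 0 < t → t ≤ 1 →
      hs v + ⟪r - Q u, w - v⟫ ≤ hs w + t * (C/2) := by
    intro t ht ht1
    have hconv' : hs (v + t • h) ≤ (1-t) * hs v + t * hs w := by
      have h2 := hconv.2 (Set.mem_univ v) (Set.mem_univ w) (by linarith : (0:ℝ) ≤ 1 - t)
        (le_of_lt ht) (by ring)
      have hvw : (1-t) • v + t • w = v + t • h := by rw [hh]; module
      simpa [hvw] using h2
    have hquad : ⟪Q (v + t • h - y0), v + t • h - y0⟫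
        = ⟪Q u, u⟫ + 2 * t * ⟪Q u, h⟫ + t^2 * C := by
      have e1 : v + t • h - y0 = u + t • h := by rw [hu]; abel
      rw [e1, hQlin t u h, inner_add_left, inner_add_right, inner_add_right,
        inner_smul_left, inner_smul_right, inner_smul_left, inner_smul_right]
      have e2 : ⟪Q h, u⟫ = ⟪Q u, h⟫ := by rw [hsymm h u, real_inner_comm]
      rw [e2, hC]
      simp only [conj_trivial]
      ring
    have hlin : ⟪v + t • h, r⟫ = ⟪v, r⟫ + t * ⟪h, r⟫ := by
      rw [inner_add_left, inner_smul_left]; simp only [conj_trivial]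
    have step : hs v - ⟪v, r⟫ + (1/2) * ⟪Q u, u⟫
        ≤ ((1-t) * hs v + t * hs w) - (⟪v, r⟫ + t * ⟪h, r⟫)
          + (1/2) * (⟪Q u, u⟫ + 2 * t * ⟪Q u, h⟫ + t^2 * C) := by
      calc hs v - ⟪v, r⟫ + (1/2) * ⟪Q u, u⟫
          ≤ hs (v + t • h) - ⟪v + t • h, r⟫
            + (1/2) * ⟪Q (v + t • h - y0), v + t • h - y0⟫ := hmin (v + t • h)
        _ ≤ _ := by rw [hquad, hlin]; linarith
    rw [hip]
    nlinarith [step, mul_pos ht ht]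
  apply le_of_forall_pos_le_add
  intro ε hε
  set t : ℝ := min 1 (ε / (C/2 + 1)) with htdef
  have htpos : 0 < t := lt_min one_pos (div_pos hε (by linarith))
  have ht1 : t ≤ 1 := min_le_left _ _
  have hkey := key t htpos ht1
  have htle : t ≤ ε / (C/2 + 1) := min_le_right _ _
  have hD : (0:ℝ) < C/2 + 1 := by linarith
  have h1 : t * (C/2 + 1) ≤ ε := by
    have := (le_div_iff₀ hD).mp htle
    linarith
  have h2 : t * (C/2) ≤ ε := by nlinarith
  linarith

lemma subdiff_limit {Y : Type*} [NormedAddCommGroup Y] [InnerProductSpace ℝ Y]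
    (hs : Y → ℝ) (hcont : Continuous hs)
    (q g : ℕ → Y) (q0 g0 : Y)
    (hq : Tendsto q atTop (nhds q0)) (hg : Tendsto g atTop (nhds g0))
    (hmem : ∀ n, g n ∈ subdiff hs (q n)) : g0 ∈ subdiff hs q0 := by
  intro w
  have ht : Tendsto (fun n => hs (q n) + ⟪g n, w - q n⟫) atTop
      (nhds (hs q0 + ⟪g0, w - q0⟫)) :=
    ((hcont.continuousAt.tendsto.comp hq).add
      (hg.inner (tendsto_const_nhds.sub hq)))
  exact le_of_tendsto ht (Eventually.of_forall fun n => hmem n w)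

lemma arith_core (α δ L b c : ℝ) (hα : 0 < α) (hδ : 0 < δ) (hL : 0 < L)
    (hb : b = 1/(2*α) - L/4 - δ/α - α*δ*L^2/2 - δ*L + α*L^2/(4*δ))
    (hc : c = b - α*L^2/(2*δ))
    (n0 n1 n2 : ℝ) :
    α*L^2*(n1*n0) + L*(n2*n0) + L*(n1*n0) + (L/2 - 1/α)*n1^2
      - (δ/α)*n2^2 + (δ/α + b)*n1^2 - b*n0^2 ≤ -c*n1^2 - c*n0^2 := by
  have hP : (0:ℝ) < 1 + α*L := by positivity
  have y1 : α*L^2*(n1*n0) ≤ δ*L*(1+α*L)*n1^2 + (α^2*L^3/(4*δ*(1+α*L)))*n0^2 := by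
    rw [← sub_nonneg]
    have e : δ*L*(1+α*L)*n1^2 + (α^2*L^3/(4*δ*(1+α*L)))*n0^2 - α*L^2*(n1*n0)
        = (2*(δ*L*(1+α*L))*n1 - α*L^2*n0)^2 / (4*(δ*L*(1+α*L))) := by
      field_simp; ring
    rw [e]; positivity
  have y2 : L*(n2*n0) ≤ (δ/α)*n2^2 + (α*L^2/(4*δ))*n0^2 := by
    rw [← sub_nonneg]
    have e : (δ/α)*n2^2 + (α*L^2/(4*δ))*n0^2 - L*(n2*n0)
        = (2*δ*n2 - α*L*n0)^2 / (4*δ*α) := by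
      field_simp; ring
    rw [e]; positivity
  have y3 : L*(n1*n0) ≤ (δ/α)*(1+α*L)*n1^2 + (α*L^2/(4*δ*(1+α*L)))*n0^2 := by
    rw [← sub_nonneg]
    have e : (δ/α)*(1+α*L)*n1^2 + (α*L^2/(4*δ*(1+α*L)))*n0^2 - L*(n1*n0)
        = (2*δ*(1+α*L)*n1 - α*L*n0)^2 / (4*δ*α*(1+α*L)) := by
      field_simp; ring
    rw [e]; positivity
  have heq : (δ*L*(1+α*L)*n1^2 + (α^2*L^3/(4*δ*(1+α*L)))*n0^2)
      + ((δ/α)*n2^2 + (α*L^2/(4*δ))*n0^2)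
      + ((δ/α)*(1+α*L)*n1^2 + (α*L^2/(4*δ*(1+α*L)))*n0^2)
      + (L/2 - 1/α)*n1^2 - (δ/α)*n2^2 + (δ/α + b)*n1^2 - b*n0^2
      = -c*n1^2 - c*n0^2 := by
    rw [hc, hb]; field_simp; ring
  linarith [y1, y2, y3]

set_option maxHeartbeats 4000000 in
/-- under the Łojasiewicz property with exponent `θ = 0` (`φ(s) = σ s`),
the bounded PPDG sequence converges in finitely many steps. -/
theorem stmt8
    {X : Type*} [NormedAddCommGroup X] [InnerProductSpace ℝ X] [FiniteDimensional ℝ X]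
    {Y : Type*} [NormedAddCommGroup Y] [InnerProductSpace ℝ Y] [FiniteDimensional ℝ Y]
    (A : X →L[ℝ] Y) (hA : Function.Surjective A)
    (f : X → ℝ) (f' : X → X) (hf : ∀ p, HasGradientAt f (f' p) p)
    (Lf : ℝ) (hLf : 0 < Lf) (hLip : ∀ p q, ‖f' p - f' q‖ ≤ Lf * ‖p - q‖)
    (hs : Y → ℝ) (hconv : ConvexOn ℝ Set.univ hs)
    (hbdd : ∀ w : Y, BddBelow (Set.range fun p : X => f p + ⟪w, A p⟫ - hs w))
    (α : ℝ) (hα : 0 < α)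
    (x : ℕ → X) (y : ℕ → Y)
    (hxiter : ∀ k : ℕ,
      x (k+1) = x k - α • (f' (x k) + (ContinuousLinearMap.adjoint A) (y k)))
    (hyiter : ∀ k : ℕ, ∀ w : Y,
      hs (y (k+1)) - ⟪y (k+1), A ((2:ℝ) • x (k+1) - x k)⟫
        + (1/2) * ⟪α • A ((ContinuousLinearMap.adjoint A) (y (k+1) - y k)), y (k+1) - y k⟫
      ≤ hs w - ⟪w, A ((2:ℝ) • x (k+1) - x k)⟫
        + (1/2) * ⟪α • A ((ContinuousLinearMap.adjoint A) (w - y k)), w - y k⟫)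
    (δ a b c : ℝ) (hδ : 0 < δ)
    (hadef : a = δ / α)
    (hbdef : b = 1/(2*α) - Lf/4 - δ/α - α*δ*Lf^2/2 - δ*Lf + α*Lf^2/(4*δ))
    (hcdef : c = b - α*Lf^2/(2*δ))
    (hapos : 0 < a) (hbpos : 0 < b) (hcpos : 0 < c)
    (hbound : ∃ R : ℝ, ∀ k : ℕ, ‖x k‖ ≤ R ∧ ‖y k‖ ≤ R)
    (hKL : ∀ z : X × Y × X × X, (subLyap A f' hs a b z).Nonempty →
      ∃ η : ℝ, 0 < η ∧ ∃ U ∈ nhds z, ∃ σ : ℝ, 0 < σ ∧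
        (∀ w ∈ U, 0 < LyapFn A f hs a b w - LyapFn A f hs a b z →
          LyapFn A f hs a b w - LyapFn A f hs a b z < η →
          1 ≤ σ * Metric.infDist (0 : X × Y × X × X) (subLyap A f' hs a b w))) :
    ∃ K : ℕ, ∀ k : ℕ, K ≤ k → x k = x K ∧ y k = y K := by
  classical
  have hαne : α ≠ 0 := ne_of_gt hα
  set B := ContinuousLinearMap.adjoint A with hB
  set d : ℕ → X := fun k => x (k+1) - x k with hd
  -- x-update identity
  have hxidα : ∀ k, α • (f' (x k) + B (y k)) = -(d k) := by
    intro k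
    simp only [hd]
    rw [hxiter k]
    abel
  have hxid : ∀ k, f' (x k) + B (y k) = -(α⁻¹ • d k) := by
    intro k
    have h1 := congrArg (fun v : X => α⁻¹ • v) (hxidα k)
    simpa [smul_smul, inv_mul_cancel₀ hαne] using h1
  -- adjoint inner helpers
  have hAB : ∀ (u : X) (v : Y), ⟪A u, v⟫ = ⟪B v, u⟫ := by
    intro u v
    rw [real_inner_comm, ← ContinuousLinearMap.adjoint_inner_left]
  have hABB : ∀ u v : Y, ⟪A (B u), v⟫ = ⟪B u, B v⟫ := by
    intro u v
    rw [hAB (B u) v, real_inner_comm]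
  -- subgradients from the y-update
  set g : ℕ → Y := fun k => A ((2:ℝ) • x (k+1) - x k) - α • A (B (y (k+1) - y k)) with hgdef
  have hsub : ∀ k, g k ∈ subdiff hs (y (k+1)) := by
    intro k
    have hsymm : ∀ u v : Y, ⟪α • A (B u), v⟫ = ⟪u, α • A (B v)⟫ := by
      intro u v
      rw [real_inner_smul_left, real_inner_smul_right, hABB u v, real_inner_comm,
        ← hABB v u, real_inner_comm]
    have hpos : ∀ u : Y, (0:ℝ) ≤ ⟪α • A (B u), u⟫ := by
      intro u
      rw [real_inner_smul_left, hABB u u]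
      exact mul_nonneg hα.le real_inner_self_nonneg
    have hQlin : ∀ (s : ℝ) (u v : Y), α • A (B (u + s • v)) = α • A (B u) + s • (α • A (B v)) := by
      intro s u v
      rw [map_add, map_smul, map_add, map_smul, smul_add, smul_comm]
    exact subgrad_of_min hs hconv (fun w => α • A (B w)) hsymm hpos hQlin
      (A ((2:ℝ) • x (k+1) - x k)) (y k) (y (k+1)) (hyiter k)
  -- scaled adjoint difference identity
  have he0 : ∀ k, α • B (y (k+1) - y k)
      = -(d (k+1)) + d k - α • (f' (x (k+1)) - f' (x k)) := by
    intro k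
    have h1 := hxidα k
    have h2 := hxidα (k+1)
    rw [smul_add] at h1 h2
    rw [map_sub, smul_sub]
    have h1' : α • B (y k) = -(d k) - α • f' (x k) := by rw [← h1]; abel
    have h2' : α • B (y (k+1)) = -(d (k+1)) - α • f' (x (k+1)) := by rw [← h2]; abel
    rw [h1', h2', smul_sub]
    abel
  -- Lyapunov sequence
  set Z : ℕ → X × Y × X × X := fun k => (x (k+1), y (k+1), x (k+2), x k) with hZ
  set E : ℕ → ℝ := fun k => LyapFn A f hs a b (Z k) with hE
  -- the decrease property
  have hdec : ∀ k, E (k+1) ≤ E k - c * ‖d (k+1)‖^2 - c * ‖d k‖^2 := by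
    intro k
    have hn10 : ‖x (k+1) - x (k+2)‖ = ‖d (k+1)‖ := by simp only [hd]; exact norm_sub_rev _ _
    have hn21 : ‖x (k+2) - x (k+3)‖ = ‖d (k+2)‖ := by simp only [hd]; exact norm_sub_rev _ _
    have hn12 : ‖x (k+2) - x (k+1)‖ = ‖d (k+1)‖ := by simp only [hd]
    have hn00 : ‖x (k+1) - x k‖ = ‖d k‖ := by simp only [hd]
    -- descent lemma
    have J1 : f (x (k+2)) ≤ f (x (k+1)) + ⟪f' (x (k+1)), x (k+2) - x (k+1)⟫
        + Lf/2 * ‖d (k+1)‖^2 := by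
      have := descent_lemma f f' hf Lf hLip (x (k+1)) (x (k+2))
      rwa [hn12] at this
    -- subgradient inequality
    have J2 : hs (y (k+1)) + ⟪g k, y (k+2) - y (k+1)⟫ ≤ hs (y (k+2)) := hsub k (y (k+2))
    -- inner product decomposition
    have J3 : ⟪y (k+2), A (x (k+2))⟫ - ⟪y (k+1), A (x (k+1))⟫
        = ⟪B (y (k+2) - y (k+1)), x (k+2)⟫ + ⟪B (y (k+1)), x (k+2) - x (k+1)⟫ := by
      rw [← ContinuousLinearMap.adjoint_inner_left, ← ContinuousLinearMap.adjoint_inner_left,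
        ← hB, map_sub, inner_sub_left, inner_sub_right]
      ring
    have J4 : ⟪B (y (k+1)), x (k+2) - x (k+1)⟫
        = -(α⁻¹ * ‖d (k+1)‖^2) - ⟪f' (x (k+1)), x (k+2) - x (k+1)⟫ := by
      have h6 : ⟪f' (x (k+1)) + B (y (k+1)), x (k+2) - x (k+1)⟫ = -(α⁻¹ * ‖d (k+1)‖^2) := by
        rw [hxid (k+1), inner_neg_left, real_inner_smul_left]
        have : (x (k+2) - x (k+1)) = d (k+1) := by simp only [hd]
        rw [this, real_inner_self_eq_norm_sq]
      rw [inner_add_left] at h6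
      linarith
    -- the cross term
    have J5 : ⟪B (y (k+2) - y (k+1)), x (k+2)⟫ - ⟪g k, y (k+2) - y (k+1)⟫
        = α * ⟪f' (x (k+2)) - f' (x (k+1)), f' (x (k+1)) - f' (x k)⟫
          + ⟪d (k+2), f' (x (k+1)) - f' (x k)⟫ - ⟪d (k+1), f' (x (k+1)) - f' (x k)⟫ := by
      have e0 := he0 k
      have e1 := he0 (k+1)
      have hgin : ⟪g k, y (k+2) - y (k+1)⟫
          = ⟪B (y (k+2) - y (k+1)), (2:ℝ) • x (k+1) - x k⟫
            - ⟪B (y (k+2) - y (k+1)), α • B (y (k+1) - y k)⟫ := by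
        simp only [hgdef]
        rw [inner_sub_left, hAB, real_inner_smul_left, hABB, real_inner_smul_right,
          real_inner_comm (B (y (k+1) - y k))]
      have hsplit : ⟪B (y (k+2) - y (k+1)), x (k+2)⟫ - ⟪g k, y (k+2) - y (k+1)⟫
          = ⟪B (y (k+2) - y (k+1)),
              x (k+2) - ((2:ℝ) • x (k+1) - x k) + α • B (y (k+1) - y k)⟫ := by
        have h7 : ⟪B (y (k+2) - y (k+1)),
              x (k+2) - ((2:ℝ) • x (k+1) - x k) + α • B (y (k+1) - y k)⟫
            = ⟪B (y (k+2) - y (k+1)), x (k+2) - ((2:ℝ) • x (k+1) - x k)⟫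
              + ⟪B (y (k+2) - y (k+1)), α • B (y (k+1) - y k)⟫ := inner_add_right _ _ _
        have h8 : ⟪B (y (k+2) - y (k+1)), x (k+2) - ((2:ℝ) • x (k+1) - x k)⟫
            = ⟪B (y (k+2) - y (k+1)), x (k+2)⟫
              - ⟪B (y (k+2) - y (k+1)), (2:ℝ) • x (k+1) - x k⟫ := inner_sub_right _ _ _
        rw [hgin, h7, h8]
        ring
      have harg : x (k+2) - ((2:ℝ) • x (k+1) - x k) + α • B (y (k+1) - y k)
          = -(α • (f' (x (k+1)) - f' (x k))) := by
        rw [e0]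
        simp only [hd]
        module
      calc ⟪B (y (k+2) - y (k+1)), x (k+2)⟫ - ⟪g k, y (k+2) - y (k+1)⟫
          = ⟪B (y (k+2) - y (k+1)), -(α • (f' (x (k+1)) - f' (x k)))⟫ := by
            rw [hsplit, harg]
        _ = -⟪α • B (y (k+2) - y (k+1)), f' (x (k+1)) - f' (x k)⟫ := by
            rw [inner_neg_right, real_inner_smul_right, real_inner_smul_left]
        _ = -⟪-(d (k+2)) + d (k+1) - α • (f' (x (k+2)) - f' (x (k+1))),
              f' (x (k+1)) - f' (x k)⟫ := by rw [e1]
        _ = α * ⟪f' (x (k+2)) - f' (x (k+1)), f' (x (k+1)) - f' (x k)⟫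
              + ⟪d (k+2), f' (x (k+1)) - f' (x k)⟫
              - ⟪d (k+1), f' (x (k+1)) - f' (x k)⟫ := by
            rw [inner_sub_left, inner_add_left, inner_neg_left, real_inner_smul_left]
            ring
    -- Cauchy-Schwarz + Lipschitz bounds
    have hb1 : ‖f' (x (k+2)) - f' (x (k+1))‖ ≤ Lf * ‖d (k+1)‖ := by
      have := hLip (x (k+2)) (x (k+1)); rwa [hn12] at this
    have hb0 : ‖f' (x (k+1)) - f' (x k)‖ ≤ Lf * ‖d k‖ := by
      have := hLip (x (k+1)) (x k); rwa [hn00] at this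
    have KC1 : α * ⟪f' (x (k+2)) - f' (x (k+1)), f' (x (k+1)) - f' (x k)⟫
        ≤ α * Lf^2 * (‖d (k+1)‖ * ‖d k‖) := by
      have hcs := real_inner_le_norm (f' (x (k+2)) - f' (x (k+1))) (f' (x (k+1)) - f' (x k))
      have hm : ‖f' (x (k+2)) - f' (x (k+1))‖ * ‖f' (x (k+1)) - f' (x k)‖
          ≤ (Lf * ‖d (k+1)‖) * (Lf * ‖d k‖) :=
        mul_le_mul hb1 hb0 (norm_nonneg _) (by positivity)
      calc α * ⟪f' (x (k+2)) - f' (x (k+1)), f' (x (k+1)) - f' (x k)⟫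
          ≤ α * ((Lf * ‖d (k+1)‖) * (Lf * ‖d k‖)) :=
            mul_le_mul_of_nonneg_left (hcs.trans hm) hα.le
        _ = α * Lf^2 * (‖d (k+1)‖ * ‖d k‖) := by ring
    have KC2 : ⟪d (k+2), f' (x (k+1)) - f' (x k)⟫ ≤ Lf * (‖d (k+2)‖ * ‖d k‖) := by
      have hcs := real_inner_le_norm (d (k+2)) (f' (x (k+1)) - f' (x k))
      have hm : ‖d (k+2)‖ * ‖f' (x (k+1)) - f' (x k)‖ ≤ ‖d (k+2)‖ * (Lf * ‖d k‖) :=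
        mul_le_mul_of_nonneg_left hb0 (norm_nonneg _)
      calc ⟪d (k+2), f' (x (k+1)) - f' (x k)⟫ ≤ ‖d (k+2)‖ * (Lf * ‖d k‖) := hcs.trans hm
        _ = Lf * (‖d (k+2)‖ * ‖d k‖) := by ring
    have KC3 : -⟪d (k+1), f' (x (k+1)) - f' (x k)⟫ ≤ Lf * (‖d (k+1)‖ * ‖d k‖) := by
      have hcs := real_inner_le_norm (-(d (k+1))) (f' (x (k+1)) - f' (x k))
      rw [inner_neg_left, norm_neg] at hcs
      have hm : ‖d (k+1)‖ * ‖f' (x (k+1)) - f' (x k)‖ ≤ ‖d (k+1)‖ * (Lf * ‖d k‖) :=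
        mul_le_mul_of_nonneg_left hb0 (norm_nonneg _)
      calc -⟪d (k+1), f' (x (k+1)) - f' (x k)⟫ ≤ ‖d (k+1)‖ * (Lf * ‖d k‖) := hcs.trans hm
        _ = Lf * (‖d (k+1)‖ * ‖d k‖) := by ring
    have arith := arith_core α δ Lf b c hα hδ hLf hbdef hcdef ‖d k‖ ‖d (k+1)‖ ‖d (k+2)‖
    have hEk : E k = (f (x (k+1)) + ⟪y (k+1), A (x (k+1))⟫ - hs (y (k+1)))
        - a * ‖x (k+1) - x (k+2)‖^2 + b * ‖x (k+1) - x k‖^2 := by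
      simp only [hE, hZ, LyapFn]
    have hEk1 : E (k+1) = (f (x (k+2)) + ⟪y (k+2), A (x (k+2))⟫ - hs (y (k+2)))
        - a * ‖x (k+2) - x (k+3)‖^2 + b * ‖x (k+2) - x (k+1)‖^2 := by
      simp only [hE, hZ, LyapFn]
    rw [hEk, hEk1, hn10, hn21, hn12, hn00, hadef]
    have hid : (1:ℝ)/α = α⁻¹ := one_div α
    ring_nf at J1 J2 J3 J4 J5 KC1 KC2 KC3 arith ⊢
    linarith [J1, J2, J3, J4, J5, KC1, KC2, KC3, arith]
  -- continuity facts
  have hcontf : Continuous f := by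
    have hdf : Differentiable ℝ f := fun p => (hf p).differentiableAt
    exact hdf.continuous
  have hconts : Continuous hs := by
    rw [← continuousOn_univ]
    exact hconv.continuousOn isOpen_univ
  have hLcont : Continuous (LyapFn A f hs a b) := by
    have c1 : Continuous fun z : X × Y × X × X => z.1 := continuous_fst
    have c2 : Continuous fun z : X × Y × X × X => z.2.1 := continuous_fst.comp continuous_snd
    have c3 : Continuous fun z : X × Y × X × X => z.2.2.1 :=
      continuous_fst.comp (continuous_snd.comp continuous_snd)
    have c4 : Continuous fun z : X × Y × X × X => z.2.2.2 :=
      continuous_snd.comp (continuous_snd.comp continuous_snd)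
    unfold LyapFn
    exact ((((hcontf.comp c1).add (c2.inner (A.continuous.comp c1))).sub
      (hconts.comp c2)).sub (continuous_const.mul ((c1.sub c3).norm.pow 2))).add
      (continuous_const.mul ((c1.sub c4).norm.pow 2))
  obtain ⟨R, hR⟩ := hbound
  have hZnorm : ∀ k, ‖Z k‖ ≤ R := by
    intro k
    have : ‖Z k‖ = max ‖x (k+1)‖ (max ‖y (k+1)‖ (max ‖x (k+2)‖ ‖x k‖)) := by
      simp only [hZ]
      rw [Prod.norm_def, Prod.norm_def, Prod.norm_def]
    rw [this]
    exact max_le (hR _).1 (max_le (hR _).2 (max_le (hR _).1 (hR _).1))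
  have hZbd : ∀ k, Z k ∈ Metric.closedBall (0 : X × Y × X × X) R := by
    intro k
    rw [Metric.mem_closedBall, dist_zero_right]
    exact hZnorm k
  have hcpt : IsCompact (Metric.closedBall (0 : X × Y × X × X) R) :=
    isCompact_closedBall _ _
  have hEb : BddBelow (Set.range E) := by
    have h1 : BddBelow (LyapFn A f hs a b '' Metric.closedBall 0 R) :=
      (hcpt.image hLcont).bddBelow
    refine BddBelow.mono ?_ h1
    rintro _ ⟨k, rfl⟩
    exact ⟨Z k, hZbd k, rfl⟩
  have hEanti : Antitone E := antitone_nat_of_succ_le (fun k => by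
    linarith [hdec k, mul_nonneg hcpos.le (sq_nonneg ‖d (k+1)‖),
      mul_nonneg hcpos.le (sq_nonneg ‖d k‖)])
  set ℓ := ⨅ k, E k with hldef
  have hEtend : Tendsto E atTop (nhds ℓ) := tendsto_atTop_ciInf hEanti hEb
  have hEge : ∀ k, ℓ ≤ E k := fun k => ciInf_le hEb k
  -- the steps tend to zero
  have hdiffto : Tendsto (fun k => E k - E (k+1)) atTop (nhds 0) := by
    have := hEtend.sub (hEtend.comp (tendsto_add_atTop_nat 1))
    simpa using this
  have hdnorm : Tendsto (fun k => ‖d k‖^2) atTop (nhds 0) := by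
    have hbnd : ∀ k, ‖d k‖^2 ≤ (E k - E (k+1)) / c := by
      intro k
      have h2 := mul_nonneg hcpos.le (sq_nonneg ‖d (k+1)‖)
      have h3 : c * ‖d k‖^2 ≤ E k - E (k+1) := by linarith [hdec k]
      calc ‖d k‖^2 = (c * ‖d k‖^2) / c := by field_simp
        _ ≤ (E k - E (k+1)) / c := by gcongr
    have hgto : Tendsto (fun k => (E k - E (k+1)) / c) atTop (nhds 0) := by
      have := hdiffto.div_const c
      simpa using this
    exact squeeze_zero (fun k => sq_nonneg _) hbnd hgto
  have hd0 : Tendsto d atTop (nhds 0) := by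
    rw [tendsto_zero_iff_norm_tendsto_zero]
    have hsq : Tendsto (fun k => Real.sqrt (‖d k‖^2)) atTop (nhds 0) := by
      have := (Real.continuous_sqrt.tendsto 0).comp hdnorm
      simpa [Function.comp_def] using this
    have heqn : (fun k => ‖d k‖) = fun k => Real.sqrt (‖d k‖^2) :=
      funext fun k => (Real.sqrt_sq (norm_nonneg _)).symm
    rw [heqn]
    exact hsq
  have hd1 : Tendsto (fun k => d (k+1)) atTop (nhds 0) := hd0.comp (tendsto_add_atTop_nat 1)
  have hDel : Tendsto (fun k => f' (x (k+1)) - f' (x k)) atTop (nhds 0) := by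
    have hlip2 : ∀ k, ‖f' (x (k+1)) - f' (x k)‖ ≤ Lf * ‖d k‖ := by
      intro k
      have := hLip (x (k+1)) (x k)
      simpa [hd] using this
    exact squeeze_zero_norm hlip2 (by simpa using hd0.norm.const_mul Lf)
  -- the subgradient witness
  set D : ℕ → X × Y × X × X := fun k =>
    (f' (x (k+1)) + B (y (k+1)) - (2*a) • (x (k+1) - x (k+2)) + (2*b) • (x (k+1) - x k),
     A (x (k+1)) - g k,
     (2*a) • (x (k+1) - x (k+2)),
     (2*b) • (x k - x (k+1))) with hD
  have hDmem : ∀ k, D k ∈ subLyap A f' hs a b (Z k) := fun k => ⟨g k, hsub k, rfl⟩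
  have hDto : Tendsto D atTop (nhds 0) := by
    have comp2 : ∀ k, A (x (k+1)) - g k
        = A (-(d (k+1)) - α • (f' (x (k+1)) - f' (x k))) := by
      intro k
      simp only [hgdef]
      calc A (x (k+1)) - (A ((2:ℝ) • x (k+1) - x k) - α • A (B (y (k+1) - y k)))
          = A (x (k+1) - ((2:ℝ) • x (k+1) - x k) + α • B (y (k+1) - y k)) := by
            simp only [map_add, map_sub, map_smul]
            abel
        _ = A (-(d (k+1)) - α • (f' (x (k+1)) - f' (x k))) := by
            congr 1
            rw [he0 k]
            simp only [hd]
            module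
    have hDeq : D = fun k => ((-(α⁻¹ • d (k+1)) + (2*a) • d (k+1) + (2*b) • d k,
        A (-(d (k+1)) - α • (f' (x (k+1)) - f' (x k))),
        (2*a) • (-(d (k+1))), (2*b) • (-(d k))) : X × Y × X × X) := by
      funext k
      rw [hD]
      simp only [Prod.mk.injEq]
      refine ⟨?_, comp2 k, ?_, ?_⟩
      · rw [hxid (k+1)]
        simp only [hd]
        module
      · simp only [hd]; module
      · simp only [hd]; module
    rw [hDeq]
    have t1 : Tendsto (fun k => -(α⁻¹ • d (k+1)) + (2*a) • d (k+1) + (2*b) • d k)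
        atTop (nhds 0) := by
      have := ((hd1.const_smul α⁻¹).neg.add (hd1.const_smul (2*a))).add (hd0.const_smul (2*b))
      simpa using this
    have t2 : Tendsto (fun k => A (-(d (k+1)) - α • (f' (x (k+1)) - f' (x k))))
        atTop (nhds 0) := by
      have harg : Tendsto (fun k => -(d (k+1)) - α • (f' (x (k+1)) - f' (x k)))
          atTop (nhds 0) := by
        have := hd1.neg.sub (hDel.const_smul α)
        simpa using this
      have := (A.continuous.tendsto 0).comp harg
      simpa [Function.comp_def, map_zero] using this
    have t3 : Tendsto (fun k => (2*a) • (-(d (k+1)))) atTop (nhds 0) := by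
      have := hd1.neg.const_smul (2*a)
      simpa using this
    have t4 : Tendsto (fun k => (2*b) • (-(d k))) atTop (nhds 0) := by
      have := hd0.neg.const_smul (2*b)
      simpa using this
    exact t1.prodMk_nhds (t2.prodMk_nhds (t3.prodMk_nhds t4))
  have hinf : ∀ k, Metric.infDist (0 : X × Y × X × X) (subLyap A f' hs a b (Z k)) ≤ ‖D k‖ := by
    intro k
    have := Metric.infDist_le_dist_of_mem (x := (0 : X × Y × X × X)) (hDmem k)
    rwa [dist_zero_left] at this
  have hinfto : Tendsto (fun k => Metric.infDist (0 : X × Y × X × X)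
      (subLyap A f' hs a b (Z k))) atTop (nhds 0) :=
    squeeze_zero (fun k => Metric.infDist_nonneg) hinf (by simpa using hDto.norm)
  -- main case split
  by_cases hfin : ∃ K, ∀ k, K ≤ k → x (k+1) = x k
  · obtain ⟨K, hK⟩ := hfin
    have hxconst : ∀ k, K ≤ k → x k = x K := by
      intro k hk
      induction k, hk using Nat.le_induction with
      | base => rfl
      | succ n hn ih => rw [hK n hn, ih]
    have hystep : ∀ k, K ≤ k → y (k+1) = y k := by
      intro k hk
      have hdk : d k = 0 := by simp only [hd]; rw [hK k hk, sub_self]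
      have hdk1 : d (k+1) = 0 := by
        simp only [hd]; rw [hK (k+1) (le_trans hk (Nat.le_succ k)), hK k hk, sub_self]
      have hdel : f' (x (k+1)) - f' (x k) = 0 := by rw [hK k hk, sub_self]
      have hBe : α • B (y (k+1) - y k) = 0 := by
        rw [he0 k, hdk, hdk1, hdel]
        simp
      have hBe0 : B (y (k+1) - y k) = 0 := by
        rcases smul_eq_zero.mp hBe with h | h
        · exact absurd h hαne
        · exact h
      obtain ⟨u, hu⟩ := hA (y (k+1) - y k)
      have hzero : ⟪y (k+1) - y k, y (k+1) - y k⟫ = (0:ℝ) := by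
        calc ⟪y (k+1) - y k, y (k+1) - y k⟫ = ⟪y (k+1) - y k, A u⟫ := by rw [hu]
          _ = ⟪B (y (k+1) - y k), u⟫ :=
              (ContinuousLinearMap.adjoint_inner_left A u (y (k+1) - y k)).symm
          _ = 0 := by rw [hBe0, inner_zero_left]
      have := inner_self_eq_zero.mp hzero
      rwa [sub_eq_zero] at this
    have hyconst : ∀ k, K ≤ k → y k = y K := by
      intro k hk
      induction k, hk using Nat.le_induction with
      | base => rfl
      | succ n hn ih => rw [hystep n hn, ih]
    exact ⟨K, fun k hk => ⟨hxconst k hk, hyconst k hk⟩⟩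
  · exfalso
    push_neg at hfin
    have hgt : ∀ k, ℓ < E k := by
      intro k
      obtain ⟨m, hm, hne⟩ := hfin k
      have hdm : d m ≠ 0 := by simp only [hd]; exact sub_ne_zero.mpr hne
      have hpos : 0 < c * ‖d m‖^2 :=
        mul_pos hcpos (pow_pos (norm_pos_iff.mpr hdm) 2)
      calc ℓ ≤ E (m+1) := hEge (m+1)
        _ < E m := by
            linarith [hdec m, mul_nonneg hcpos.le (sq_nonneg ‖d (m+1)‖)]
        _ ≤ E k := hEanti hm
    set W : ℕ → (X × Y × X × X) × Y := fun k => (Z k, y k) with hW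
    have hWbd : ∀ k, W k ∈ Metric.closedBall (0 : (X × Y × X × X) × Y) R := by
      intro k
      rw [Metric.mem_closedBall, dist_zero_right, Prod.norm_def]
      exact max_le (hZnorm k) (hR k).2
    obtain ⟨p, hpcl, φ, hφmono, hφt⟩ :=
      tendsto_subseq_of_bounded Metric.isBounded_closedBall hWbd
    have hZt : Tendsto (fun j => Z (φ j)) atTop (nhds p.1) :=
      (continuous_fst.tendsto p).comp hφt
    have hyt : Tendsto (fun j => y (φ j)) atTop (nhds p.2) :=
      (continuous_snd.tendsto p).comp hφt
    have hEt2 : Tendsto (fun j => E (φ j)) atTop (nhds (LyapFn A f hs a b p.1)) := by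
      have h := (hLcont.tendsto p.1).comp hZt
      simp only [hE]
      exact h
    have hEt3 : Tendsto (fun j => E (φ j)) atTop (nhds ℓ) :=
      hEtend.comp hφmono.tendsto_atTop
    have hLp : LyapFn A f hs a b p.1 = ℓ := tendsto_nhds_unique hEt2 hEt3
    have hx1t : Tendsto (fun j => x (φ j + 1)) atTop (nhds p.1.1) :=
      (continuous_fst.tendsto p.1).comp hZt
    have hy1t : Tendsto (fun j => y (φ j + 1)) atTop (nhds p.1.2.1) :=
      ((continuous_fst.comp continuous_snd).tendsto p.1).comp hZt
    have hx0t : Tendsto (fun j => x (φ j)) atTop (nhds p.1.2.2.2) :=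
      ((continuous_snd.comp (continuous_snd.comp continuous_snd)).tendsto p.1).comp hZt
    have hgt2 : Tendsto (fun j => g (φ j)) atTop
        (nhds (A ((2:ℝ) • p.1.1 - p.1.2.2.2) - α • A (B (p.1.2.1 - p.2)))) := by
      simp only [hgdef]
      exact ((A.continuous.tendsto _).comp ((hx1t.const_smul (2:ℝ)).sub hx0t)).sub
        ((((A.continuous.comp B.continuous).tendsto _).comp (hy1t.sub hyt)).const_smul α)
    have hglim : (A ((2:ℝ) • p.1.1 - p.1.2.2.2) - α • A (B (p.1.2.1 - p.2)))
        ∈ subdiff hs p.1.2.1 :=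
      subdiff_limit hs hconts _ _ _ _ hy1t hgt2 (fun j => hsub (φ j))
    have hnonempty : (subLyap A f' hs a b p.1).Nonempty := ⟨_, _, hglim, rfl⟩
    obtain ⟨η, hη, U, hU, σ, hσ, hKLp⟩ := hKL p.1 hnonempty
    have ev1 : ∀ᶠ j in atTop, Z (φ j) ∈ U := hZt.eventually_mem hU
    have ev2 : ∀ᶠ j in atTop, E (φ j) - ℓ < η := by
      have h0 : Tendsto (fun j => E (φ j) - ℓ) atTop (nhds 0) := by
        simpa using hEt3.sub_const ℓ
      exact h0.eventually_lt_const hη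
    have ev3 : ∀ᶠ j in atTop,
        σ * Metric.infDist (0 : X × Y × X × X) (subLyap A f' hs a b (Z (φ j))) < 1 := by
      have h0 : Tendsto (fun j => σ * Metric.infDist (0 : X × Y × X × X)
          (subLyap A f' hs a b (Z (φ j)))) atTop (nhds 0) := by
        have := (hinfto.comp hφmono.tendsto_atTop).const_mul σ
        simpa [mul_comm] using this
      exact h0.eventually_lt_const one_pos
    obtain ⟨j, ⟨hj1, hj2⟩, hj3⟩ := ((ev1.and ev2).and ev3).exists
    have hKLj := hKLp (Z (φ j)) hj1 (by rw [hLp]; exact sub_pos.mpr (hgt (φ j)))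
      (by rw [hLp]; exact hj2)
    exact absurd hKLj (not_le.mpr hj3)
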